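/- In the random model with B-irreducible probability matrices, let p = ε^{2(n−1)} and consider the push-sum iterates. Then for every i ∈ [n] and every t ≥ 0, E[ln(1/y_i(t))] ≤ ln(n) · (nB/p + B). -/

import Mathlib

open Finset MeasureTheory

/-- `A_{S S̄} = ∑_{i ∈ S, j ∉ S} A i j`. -/
def flowSum {n : ℕ} (A : Matrix (Fin n) (Fin n) ℝ) (S : Finset (Fin n)) : ℝ :=
  ∑ i ∈ S, ∑ j ∈ Sᶜ, A i j

/-- `S` is a nontrivial subset of `[n]`. -/
def NontrivialSubset {n : ℕ} (S : Finset (Fin n)) : Prop :=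
  S.Nonempty ∧ S ≠ Finset.univ

/-- Directed infinite flow property: for every nontrivial `S`, `∑_t A_{S S̄}(t) = ∞`. -/
def DirectedInfiniteFlow {n : ℕ} (A : ℕ → Matrix (Fin n) (Fin n) ℝ) : Prop :=
  ∀ S : Finset (Fin n), NontrivialSubset S →
    Filter.Tendsto (fun T => ∑ t ∈ Finset.range T, flowSum (A t) S)
      Filter.atTop Filter.atTop

/-- The backward product `A(t:s) = A(t) A(t-1) ⋯ A(s)`. -/
def matProd {n : ℕ} (A : ℕ → Matrix (Fin n) (Fin n) ℝ) (t s : ℕ) :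
    Matrix (Fin n) (Fin n) ℝ :=
  (((List.range (t + 1 - s)).map fun k => A (t - k))).prod

/-- Row-stochastic nonnegative matrix. -/
def RowStochastic {n : ℕ} (A : Matrix (Fin n) (Fin n) ℝ) : Prop :=
  (∀ i j, 0 ≤ A i j) ∧ ∀ i, ∑ j, A i j = 1

/-- Column-stochastic nonnegative matrix. -/
def ColStochastic {n : ℕ} (A : Matrix (Fin n) (Fin n) ℝ) : Prop :=
  (∀ i j, 0 ≤ A i j) ∧ ∀ j, ∑ i, A i j = 1

/-- `W` is the degree-normalized adjacency matrix of a digraph with all self-loops: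
`W i j = 1 / (out-degree of j)` if there is an edge from `j` to `i`, else `0`. -/
def OutDegreeForm {n : ℕ} (W : Matrix (Fin n) (Fin n) ℝ) : Prop :=
  ∃ N : Fin n → Finset (Fin n), (∀ j, j ∈ N j) ∧
    ∀ i j, W i j = if i ∈ N j then (1 : ℝ) / (N j).card else 0

/-- Strong aperiodicity of a sequence of matrices. -/
def StronglyAperiodic {n : ℕ} (A : ℕ → Matrix (Fin n) (Fin n) ℝ) : Prop :=
  ∃ γ : ℝ, 0 < γ ∧ ∀ t i, γ ≤ A t i i

/-- The times `k_q`: `k_0 = 0` and `k_q` is the least `t' > k_{q-1}` with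
nonzero flow `∑_{t=k_{q-1}}^{t'-1} A_{S S̄}(t) > 0` across every nontrivial cut. -/
noncomputable def kSeq {n : ℕ} (A : ℕ → Matrix (Fin n) (Fin n) ℝ) : ℕ → ℕ
  | 0 => 0
  | q + 1 => sInf {t' : ℕ | kSeq A q < t' ∧ ∀ S : Finset (Fin n), NontrivialSubset S →
      0 < ∑ t ∈ Finset.Ico (kSeq A q) t', flowSum (A t) S}

/-- `ℓ_q = k_{qn} - k_{(q-1)n}`. -/
noncomputable def ellSeq {n : ℕ} (A : ℕ → Matrix (Fin n) (Fin n) ℝ) (q : ℕ) : ℕ :=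
  kSeq A (q * n) - kSeq A ((q - 1) * n)

/-- The index set `Q_{t,s} = {q ≥ 1 : s ≤ k_{(q-1)n}, k_{qn} ≤ t}` (as a `Finset`). -/
noncomputable def QSet {n : ℕ} (A : ℕ → Matrix (Fin n) (Fin n) ℝ) (t s : ℕ) :
    Finset ℕ :=
  (Finset.Icc 1 t).filter fun q => s ≤ kSeq A ((q - 1) * n) ∧ kSeq A (q * n) ≤ t

/-- `Λ_{t,s} = ∏_{q ∈ Q_{t,s}} (1 - 1/n^{ℓ_q})`. -/
noncomputable def Lam {n : ℕ} (A : ℕ → Matrix (Fin n) (Fin n) ℝ) (t s : ℕ) : ℝ :=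
  ∏ q ∈ QSet A t s, (1 - 1 / (n : ℝ) ^ (ellSeq A q))

/-- Push-sum iterates: `u(0) = u0`, `u(t+1) = W(t) u(t)`. -/
def pushIter {n : ℕ} (W : ℕ → Matrix (Fin n) (Fin n) ℝ) (u0 : Fin n → ℝ) : ℕ → Fin n → ℝ
  | 0 => u0
  | t + 1 => (W t).mulVec (pushIter W u0 t)

/-- A nonnegative matrix is irreducible if the digraph with an edge from `j` to `i`
whenever `A i j > 0` is strongly connected. -/
def IrreducibleMat {n : ℕ} (A : Matrix (Fin n) (Fin n) ℝ) : Prop :=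
  ∀ i j : Fin n, Relation.ReflTransGen (fun a b => 0 < A b a) i j


/-- The random column-stochastic matrix built from the Bernoulli variables `R`:
`W(t)(ω)_{ij} = R_{ij}(t)(ω) / ∑_k R_{kj}(t)(ω)`. -/
noncomputable def Wof {n : ℕ} {Ω : Type*} (R : ℕ → Fin n → Fin n → Ω → ℝ)
    (t : ℕ) (ω : Ω) : Matrix (Fin n) (Fin n) ℝ :=
  fun i j => R t i j ω / ∑ k, R t k j ω

/-! ### Auxiliary material -/

/-- Mass can flow from `j` (at time `s`) to `a` (at time `t`): either stay put (self-loops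
are always realized a.s.) or move along a realized edge. -/
inductive PSReach {n : ℕ} {Ω : Type*} (R : ℕ → Fin n → Fin n → Ω → ℝ) (ω : Ω)
    (j : Fin n) (s : ℕ) : Fin n → ℕ → Prop
  | refl : PSReach R ω j s j s
  | diag {a : Fin n} {τ : ℕ} : PSReach R ω j s a τ → PSReach R ω j s a (τ + 1)
  | edge {a c : Fin n} {τ : ℕ} : PSReach R ω j s a τ → R τ c a ω = 1 →
      PSReach R ω j s c (τ + 1)

namespace PSReach

variable {n : ℕ} {Ω : Type*} {R : ℕ → Fin n → Fin n → Ω → ℝ} {ω : Ω}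
  {j a i : Fin n} {s u t : ℕ}

lemma start_le (h : PSReach R ω j s a t) : s ≤ t := by
  induction h with
  | refl => exact le_rfl
  | diag _ ih => omega
  | edge _ _ ih => omega

lemma pad (h : PSReach R ω j s a u) (hut : u ≤ t) : PSReach R ω j s a t := by
  induction hut with
  | refl => exact h
  | step _ ih => exact ih.diag

lemma comp (h2 : PSReach R ω a u i t) (h1 : PSReach R ω j s a u) :
    PSReach R ω j s i t := by
  induction h2 with
  | refl => exact h1
  | diag _ ih => exact ih.diag
  | edge _ hR ih => exact ih.edge hR

lemma mono_start (h : PSReach R ω j s a t) {s' : ℕ} (hs : s' ≤ s) :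
    PSReach R ω j s' a t :=
  h.comp ((PSReach.refl).pad hs)

end PSReach

section Det

variable {n : ℕ} {Ω : Type*} {R : ℕ → Fin n → Fin n → Ω → ℝ} {ω : Ω}

/-- Abbreviation for the push-sum `y`-iterates at a fixed `ω`. -/
noncomputable def yIter (R : ℕ → Fin n → Fin n → Ω → ℝ) (ω : Ω) : ℕ → Fin n → ℝ :=
  pushIter (fun s => Wof R s ω) (fun _ => 1)

variable (hn : 0 < n) (hd : ∀ τ (k : Fin n), R τ k k ω = 1)
  (h01 : ∀ τ (a b : Fin n), R τ a b ω = 0 ∨ R τ a b ω = 1)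

include h01 in
lemma R_nonneg : ∀ τ (a b : Fin n), 0 ≤ R τ a b ω := by
  intro τ a b; rcases h01 τ a b with h | h <;> rw [h] <;> norm_num

include hd h01 in
lemma denom_ge_one (τ : ℕ) (b : Fin n) : 1 ≤ ∑ k, R τ k b ω := by
  have := Finset.single_le_sum (f := fun k => R τ k b ω)
    (fun k _ => R_nonneg h01 τ k b) (Finset.mem_univ b)
  rw [hd τ b] at this; exact this

include h01 in
lemma denom_le_n (τ : ℕ) (b : Fin n) : ∑ k, R τ k b ω ≤ n := by
  calc ∑ k, R τ k b ω ≤ ∑ _k : Fin n, (1:ℝ) := by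
        apply Finset.sum_le_sum; intro k _
        rcases h01 τ k b with h | h <;> rw [h] <;> norm_num
    _ = n := by simp

include hd h01 in
lemma Wof_entry_ge (τ : ℕ) {a b : Fin n} (hab : R τ a b ω = 1) :
    (n : ℝ)⁻¹ ≤ Wof R τ ω a b := by
  have h1 : (1:ℝ) ≤ ∑ k, R τ k b ω := denom_ge_one hd h01 τ b
  have h2 : ∑ k, R τ k b ω ≤ n := denom_le_n h01 τ b
  have hpos : (0:ℝ) < ∑ k, R τ k b ω := lt_of_lt_of_le one_pos h1
  have : (n:ℝ)⁻¹ ≤ (∑ k, R τ k b ω)⁻¹ := inv_anti₀ hpos h2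
  simpa [Wof, hab, one_div] using this

include hd h01 in
lemma Wof_nonneg (τ : ℕ) (a b : Fin n) : 0 ≤ Wof R τ ω a b :=
  div_nonneg (R_nonneg h01 τ a b) (le_of_lt (lt_of_lt_of_le one_pos (denom_ge_one hd h01 τ b)))

include hd h01 in
lemma yIter_nonneg : ∀ (t : ℕ) (a : Fin n), 0 ≤ yIter R ω t a := by
  intro t
  induction t with
  | zero => intro a; simp [yIter, pushIter]
  | succ t ih =>
    intro a
    show 0 ≤ ((Wof R t ω).mulVec (yIter R ω t)) a
    rw [Matrix.mulVec, dotProduct]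
    exact Finset.sum_nonneg fun k _ => mul_nonneg (Wof_nonneg hd h01 t a k) (ih k)

include hd h01 in
lemma yIter_step_ge (τ : ℕ) {a c : Fin n} (hR : R τ c a ω = 1) :
    (n : ℝ)⁻¹ * yIter R ω τ a ≤ yIter R ω (τ + 1) c := by
  have hterm : (n:ℝ)⁻¹ * yIter R ω τ a ≤ Wof R τ ω c a * yIter R ω τ a :=
    mul_le_mul_of_nonneg_right (Wof_entry_ge hd h01 τ hR) (yIter_nonneg hd h01 τ a)
  refine hterm.trans ?_
  show Wof R τ ω c a * yIter R ω τ a ≤ ((Wof R τ ω).mulVec (yIter R ω τ)) c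
  rw [Matrix.mulVec, dotProduct]
  exact Finset.single_le_sum
    (f := fun k => Wof R τ ω c k * yIter R ω τ k)
    (fun k _ => mul_nonneg (Wof_nonneg hd h01 τ c k) (yIter_nonneg hd h01 τ k))
    (Finset.mem_univ a)

include hd h01 in
lemma yIter_reach_ge {j i : Fin n} {s t : ℕ} (h : PSReach R ω j s i t) :
    (n : ℝ)⁻¹ ^ (t - s) * yIter R ω s j ≤ yIter R ω t i := by
  induction h with
  | refl => simp
  | @diag a τ h ih =>
    have hsτ : s ≤ τ := h.start_le
    have heq : (n:ℝ)⁻¹ ^ (τ + 1 - s) * yIter R ω s j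
        = (n:ℝ)⁻¹ * ((n:ℝ)⁻¹ ^ (τ - s) * yIter R ω s j) := by
      rw [← mul_assoc, ← pow_succ']
      congr 2
      omega
    rw [heq]
    calc (n:ℝ)⁻¹ * ((n:ℝ)⁻¹ ^ (τ - s) * yIter R ω s j)
        ≤ (n:ℝ)⁻¹ * yIter R ω τ a :=
          mul_le_mul_of_nonneg_left ih (by positivity)
      _ ≤ yIter R ω (τ+1) a := yIter_step_ge hd h01 τ (hd τ a)
  | @edge a c τ h hR ih =>
    have hsτ : s ≤ τ := h.start_le
    have heq : (n:ℝ)⁻¹ ^ (τ + 1 - s) * yIter R ω s j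
        = (n:ℝ)⁻¹ * ((n:ℝ)⁻¹ ^ (τ - s) * yIter R ω s j) := by
      rw [← mul_assoc, ← pow_succ']
      congr 2
      omega
    rw [heq]
    calc (n:ℝ)⁻¹ * ((n:ℝ)⁻¹ ^ (τ - s) * yIter R ω s j)
        ≤ (n:ℝ)⁻¹ * yIter R ω τ a :=
          mul_le_mul_of_nonneg_left ih (by positivity)
      _ ≤ yIter R ω (τ+1) c := yIter_step_ge hd h01 τ hR

include hd h01 in
lemma yIter_sum (t : ℕ) : ∑ a, yIter R ω t a = n := by
  induction t with
  | zero => simp [yIter, pushIter]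
  | succ t ih =>
    have hstep : ∑ a, yIter R ω (t+1) a
        = ∑ b, (∑ a, Wof R t ω a b) * yIter R ω t b := by
      show ∑ a, ((Wof R t ω).mulVec (yIter R ω t)) a = _
      simp only [Matrix.mulVec, dotProduct, Finset.sum_mul]
      rw [Finset.sum_comm]
    rw [hstep]
    have hcol : ∀ b : Fin n, ∑ a, Wof R t ω a b = 1 := by
      intro b
      have hpos : (0:ℝ) < ∑ k, R t k b ω := lt_of_lt_of_le one_pos (denom_ge_one hd h01 t b)
      simp only [Wof, ← Finset.sum_div]
      exact div_self (ne_of_gt hpos)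
    simp only [hcol, one_mul]
    exact ih

include hn hd h01 in
lemma yIter_exists_one_le (t : ℕ) : ∃ a, 1 ≤ yIter R ω t a := by
  by_contra hcon
  push_neg at hcon
  have : ∑ a, yIter R ω t a < ∑ _a : Fin n, (1:ℝ) :=
    Finset.sum_lt_sum_of_nonempty (Finset.univ_nonempty_iff.2 (Fin.pos_iff_nonempty.mp hn))
      fun a _ => hcon a
  rw [yIter_sum hd h01 t] at this
  simp at this

include hd h01 in
lemma yIter_ge_pow (t : ℕ) (a : Fin n) : (n:ℝ)⁻¹ ^ t ≤ yIter R ω t a := by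
  have h := yIter_reach_ge hd h01
    ((PSReach.refl (R := R) (ω := ω) (j := a) (s := 0)).pad (Nat.zero_le t))
  simpa [yIter, pushIter] using h

include hn hd h01 in
lemma yIter_pos (t : ℕ) (a : Fin n) : 0 < yIter R ω t a :=
  lt_of_lt_of_le (by positivity) (yIter_ge_pow hd h01 t a)

include hd h01 in
lemma yIter_le_n (t : ℕ) (a : Fin n) : yIter R ω t a ≤ n := by
  have h := yIter_sum hd h01 (ω := ω) t
  calc yIter R ω t a ≤ ∑ b, yIter R ω t b :=
        Finset.single_le_sum (fun b _ => yIter_nonneg hd h01 t b) (Finset.mem_univ a)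
    _ = n := h

end Det

section Chain

variable {n B : ℕ} {ε : ℝ} {P : ℕ → Matrix (Fin n) (Fin n) ℝ}

lemma exists_cross
    (hPeps : ∀ t i j, P t i j ≠ 0 → ε ≤ P t i j)
    (hPirr : ∀ t : ℕ, IrreducibleMat (∑ t' ∈ Finset.Ico (t * B) ((t + 1) * B), P t'))
    (S : Finset (Fin n)) (hS : S.Nonempty) (hSne : S ≠ Finset.univ) (k : ℕ) :
    ∃ x : Fin n × Fin n × ℕ, x.1 ∉ S ∧ x.2.1 ∈ S ∧
      x.2.2 ∈ Finset.Ico (k * B) ((k + 1) * B) ∧ ε ≤ P x.2.2 x.2.1 x.1 := by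
  classical
  have hx0 : ∃ a0 : Fin n, a0 ∉ S := by
    by_contra h
    push_neg at h
    exact hSne (Finset.eq_univ_iff_forall.2 h)
  obtain ⟨a0, ha0⟩ := hx0
  obtain ⟨c0, hc0⟩ := hS
  have hpath := hPirr k a0 c0
  set M := ∑ t' ∈ Finset.Ico (k * B) ((k + 1) * B), P t' with hM
  have crossing : ∀ z : Fin n, Relation.ReflTransGen (fun a b => 0 < M b a) a0 z → z ∈ S →
      ∃ a, a ∉ S ∧ ∃ c, c ∈ S ∧ 0 < M c a := by
    intro z hz
    induction hz with
    | refl => intro h; exact absurd h ha0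
    | @tail y z hxy hyz ih =>
      intro hzS
      by_cases hy : y ∈ S
      · exact ih hy
      · exact ⟨y, hy, z, hzS, hyz⟩
  obtain ⟨a, haS, c, hcS, hpos⟩ := crossing c0 hpath hc0
  have hsum : (0:ℝ) < ∑ t' ∈ Finset.Ico (k * B) ((k + 1) * B), P t' c a := by
    have hMca : M c a = ∑ t' ∈ Finset.Ico (k * B) ((k + 1) * B), P t' c a := by
      rw [hM, Matrix.sum_apply]
    rwa [hMca] at hpos
  have hex : ∃ τ ∈ Finset.Ico (k * B) ((k + 1) * B), 0 < P τ c a := by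
    by_contra h
    push_neg at h
    have : ∑ t' ∈ Finset.Ico (k * B) ((k + 1) * B), P t' c a ≤ 0 :=
      Finset.sum_nonpos h
    linarith
  obtain ⟨τ, hτ, hPpos⟩ := hex
  exact ⟨(a, c, τ), haS, hcS, hτ, hPeps τ c a (ne_of_gt hPpos)⟩

lemma exists_chain (hn : 2 ≤ n)
    (hPeps : ∀ t i j, P t i j ≠ 0 → ε ≤ P t i j)
    (hPirr : ∀ t : ℕ, IrreducibleMat (∑ t' ∈ Finset.Ico (t * B) ((t + 1) * B), P t'))
    (i : Fin n) (b : ℕ) :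
    ∃ (A : ℕ → Finset (Fin n)) (a c : ℕ → Fin n) (τ : ℕ → ℕ),
      A 0 = {i} ∧ (∀ m, A (m + 1) = insert (a m) (A m)) ∧ A (n - 1) = Finset.univ ∧
      ∀ m, m < n - 1 → a m ∉ A m ∧ c m ∈ A m ∧
        τ m ∈ Finset.Ico ((b + (n - 2 - m)) * B) ((b + (n - 2 - m) + 1) * B) ∧
        ε ≤ P (τ m) (c m) (a m) := by
  classical
  have key := exists_cross (n := n) (B := B) hPeps hPirr
  let pick : Finset (Fin n) → ℕ → Fin n × Fin n × ℕ := fun S k =>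
    if h : S.Nonempty ∧ S ≠ Finset.univ then (key S h.1 h.2 k).choose else (i, i, 0)
  let A : ℕ → Finset (Fin n) := fun m =>
    Nat.rec {i} (fun m Am => insert (pick Am (b + (n - 2 - m))).1 Am) m
  have hA0 : A 0 = {i} := rfl
  have hAsucc : ∀ m, A (m + 1) = insert (pick (A m) (b + (n - 2 - m))).1 (A m) := fun _ => rfl
  have hAne : ∀ m, (A m).Nonempty := by
    intro m
    induction m with
    | zero => exact ⟨i, by simp [hA0]⟩
    | succ m ih => rw [hAsucc]; exact ih.mono (Finset.subset_insert _ _)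
  have hcard : ∀ m, m ≤ n - 1 → (A m).card = m + 1 := by
    intro m
    induction m with
    | zero => intro _; simp [hA0]
    | succ m ih =>
      intro hm
      have hcm : (A m).card = m + 1 := ih (by omega)
      have hne : A m ≠ Finset.univ := by
        intro h
        rw [h, Finset.card_univ, Fintype.card_fin] at hcm
        omega
      have hcond : (A m).Nonempty ∧ A m ≠ Finset.univ := ⟨hAne m, hne⟩
      have hspec := (key (A m) hcond.1 hcond.2 (b + (n - 2 - m))).choose_spec
      have hpick : pick (A m) (b + (n - 2 - m)) =
          (key (A m) hcond.1 hcond.2 (b + (n - 2 - m))).choose := by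
        simp only [pick, dif_pos hcond]
      rw [hAsucc, Finset.card_insert_of_notMem (by rw [hpick]; exact hspec.1), hcm]
  have hspec' : ∀ m, m < n - 1 →
      (pick (A m) (b + (n - 2 - m))).1 ∉ A m ∧ (pick (A m) (b + (n - 2 - m))).2.1 ∈ A m ∧
      (pick (A m) (b + (n - 2 - m))).2.2 ∈
        Finset.Ico ((b + (n - 2 - m)) * B) ((b + (n - 2 - m) + 1) * B) ∧
      ε ≤ P (pick (A m) (b + (n - 2 - m))).2.2 (pick (A m) (b + (n - 2 - m))).2.1
        (pick (A m) (b + (n - 2 - m))).1 := by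
    intro m hm
    have hcm : (A m).card = m + 1 := hcard m (by omega)
    have hne : A m ≠ Finset.univ := by
      intro h
      rw [h, Finset.card_univ, Fintype.card_fin] at hcm
      omega
    have hcond : (A m).Nonempty ∧ A m ≠ Finset.univ := ⟨hAne m, hne⟩
    have hpick : pick (A m) (b + (n - 2 - m)) =
        (key (A m) hcond.1 hcond.2 (b + (n - 2 - m))).choose := by
      simp only [pick, dif_pos hcond]
    rw [hpick]
    exact (key (A m) hcond.1 hcond.2 (b + (n - 2 - m))).choose_spec
  refine ⟨A, fun m => (pick (A m) (b + (n - 2 - m))).1,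
    fun m => (pick (A m) (b + (n - 2 - m))).2.1,
    fun m => (pick (A m) (b + (n - 2 - m))).2.2, hA0, hAsucc, ?_, hspec'⟩
  · have hc := hcard (n - 1) le_rfl
    apply Finset.eq_univ_of_card
    rw [hc, Fintype.card_fin]
    omega

end Chain

lemma reach_of_chain {n B : ℕ} {Ω : Type*} {R : ℕ → Fin n → Fin n → Ω → ℝ} {ω : Ω}
    (hn : 2 ≤ n)
    (A : ℕ → Finset (Fin n)) (a c : ℕ → Fin n) (τ : ℕ → ℕ) (i : Fin n) (b : ℕ)
    (hA0 : A 0 = {i}) (hAsucc : ∀ m, A (m + 1) = insert (a m) (A m))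
    (hAuniv : A (n - 1) = Finset.univ)
    (hchain : ∀ m, m < n - 1 → c m ∈ A m ∧
      τ m ∈ Finset.Ico ((b + (n - 2 - m)) * B) ((b + (n - 2 - m) + 1) * B))
    (hω : ∀ m, m < n - 1 → R (τ m) (c m) (a m) ω = 1) :
    ∀ j, PSReach R ω j (b * B) i ((b + (n - 1)) * B) := by
  have key : ∀ m, m ≤ n - 1 → ∀ j ∈ A m,
      PSReach R ω j ((b + (n - 1 - m)) * B) i ((b + (n - 1)) * B) := by
    intro m
    induction m with
    | zero =>
      intro _ j hj
      rw [hA0, Finset.mem_singleton] at hj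
      subst hj
      have h0 : n - 1 - 0 = n - 1 := by omega
      rw [h0]
      exact PSReach.refl
    | succ m ih =>
      intro hm j hj
      rw [hAsucc, Finset.mem_insert] at hj
      have hmlt : m < n - 1 := by omega
      rcases hj with hj | hj
      · subst hj
        obtain ⟨hc, hτ⟩ := hchain m hmlt
        rw [Finset.mem_Ico] at hτ
        have hidx : n - 1 - (m + 1) = n - 2 - m := by omega
        have h1 : PSReach R ω (a m) ((b + (n - 1 - (m + 1))) * B) (a m) (τ m) := by
          apply PSReach.refl.pad
          rw [hidx]
          exact hτ.1
        have h2 := h1.edge (hω m hmlt)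
        have h3 : PSReach R ω (a m) ((b + (n - 1 - (m + 1))) * B) (c m)
            ((b + (n - 1 - m)) * B) := by
          apply h2.pad
          have heq : (b + (n - 2 - m) + 1) = b + (n - 1 - m) := by omega
          rw [← heq]
          exact hτ.2
        exact (ih (by omega) (c m) hc).comp h3
      · exact (ih (by omega) j hj).mono_start
          (Nat.mul_le_mul_right B (by omega))
  intro j
  have hfin := key (n - 1) le_rfl j (by rw [hAuniv]; exact Finset.mem_univ j)
  have h0 : n - 1 - (n - 1) = 0 := by omega
  rw [h0] at hfin
  simpa using hfin

lemma my_geom_le {r : ℝ} (h0 : 0 ≤ r) (h1 : r < 1) (K : ℕ) :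
    ∑ l ∈ Finset.range K, r ^ l ≤ 1 / (1 - r) := by
  induction K with
  | zero =>
    simp only [Finset.range_zero, Finset.sum_empty]
    have h1r : (0:ℝ) < 1 - r := by linarith
    positivity
  | succ K ih =>
    have hgeq : (1 - r) * ∑ l ∈ Finset.range (K+1), r ^ l = 1 - r ^ (K+1) := by
      have := geom_sum_mul r (K+1)
      nlinarith [this]
    have hpow : (0:ℝ) ≤ r ^ (K+1) := pow_nonneg h0 _
    have h1r : (0:ℝ) < 1 - r := by linarith
    rw [le_div_iff₀ h1r, mul_comm]
    nlinarith

lemma nat_lt_div_succ_mul (a b : ℕ) (hb : 0 < b) : a < (a / b + 1) * b := by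
  calc a = b * (a / b) + a % b := (Nat.div_add_mod a b).symm
    _ < b * (a / b) + b := Nat.add_lt_add_left (Nat.mod_lt a hb) _
    _ = (a / b + 1) * b := by ring

set_option maxHeartbeats 1000000 in
theorem random_model_expected_log_inv_y_bound
    {Ω : Type*} [MeasurableSpace Ω] (μ : MeasureTheory.Measure Ω)
    [MeasureTheory.IsProbabilityMeasure μ]
    {n : ℕ} (hn : 2 ≤ n) (ε : ℝ) (hε : 0 < ε) (B : ℕ) (hB : 1 ≤ B)
    (P : ℕ → Matrix (Fin n) (Fin n) ℝ)
    (hP01 : ∀ t i j, P t i j ∈ Set.Icc (0:ℝ) 1)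
    (hPdiag : ∀ t i, P t i i = 1)
    (hPeps : ∀ t i j, P t i j ≠ 0 → ε ≤ P t i j)
    (hPirr : ∀ t : ℕ, IrreducibleMat (∑ t' ∈ Finset.Ico (t * B) ((t + 1) * B), P t'))
    (R : ℕ → Fin n → Fin n → Ω → ℝ)
    (hRmeas : ∀ t i j, Measurable (R t i j))
    (hR01 : ∀ t i j ω, R t i j ω = 0 ∨ R t i j ω = 1)
    (hRP : ∀ t i j, μ {ω | R t i j ω = 1} = ENNReal.ofReal (P t i j))
    (hindep : ProbabilityTheory.iIndepFun
      (m := fun _ : ℕ × Fin n × Fin n => Real.measurableSpace)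
      (fun p ω => R p.1 p.2.1 p.2.2 ω) μ)
    (p : ℝ) (hp : p = ε ^ (2 * (n - 1))) :
    ∀ (i : Fin n) (t : ℕ),
      ∫ ω, Real.log (1 / pushIter (fun s => Wof R s ω) (fun _ => 1) t i) ∂μ ≤
        Real.log n * ((n : ℝ) * B / p + (B : ℝ)) := by
  intro i t
  classical
  -- Basic constants
  have hn0 : 0 < n := by omega
  have hBpos : 0 < B := hB
  have hε1 : ε ≤ 1 := by
    have h1 := hPeps 0 i i (by rw [hPdiag]; norm_num)
    have h2 := (hP01 0 i i).2
    linarith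
  set pe : ℝ := ε ^ (n - 1) with hpe
  have hpe_pos : 0 < pe := pow_pos hε _
  have hpe_le1 : pe ≤ 1 := pow_le_one₀ (le_of_lt hε) hε1
  have hppe : p = pe * pe := by rw [hp, hpe, ← pow_add]; congr 1; omega
  have hp_pos : 0 < p := by rw [hppe]; positivity
  have hp_le_pe : p ≤ pe := by rw [hppe]; nlinarith
  have hn1R : (1:ℝ) ≤ n := by exact_mod_cast hn0
  have hlogn : 0 ≤ Real.log n := Real.log_nonneg hn1R
  -- a.e. all diagonal entries are realized
  have hdiag_ae : ∀ᵐ ω ∂μ, ∀ τ (k : Fin n), R τ k k ω = 1 := by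
    rw [MeasureTheory.ae_all_iff]
    intro τ
    rw [MeasureTheory.ae_all_iff]
    intro k
    have hm : MeasurableSet {ω | R τ k k ω = 1} := hRmeas τ k k (measurableSet_singleton 1)
    have h1 : μ {ω | R τ k k ω = 1} = 1 := by rw [hRP, hPdiag]; norm_num
    have h0 : μ {ω | R τ k k ω = 1}ᶜ = 0 := by
      rw [prob_compl_eq_one_sub hm, h1, tsub_self]
    exact Filter.eventually_iff.2 (mem_ae_iff.2 h0)
  -- measurability of the iterates
  have ymeas : ∀ (s : ℕ) (a : Fin n), Measurable (fun ω => yIter R ω s a) := by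
    intro s
    induction s with
    | zero => intro a; simp only [yIter, pushIter]; exact measurable_const
    | succ s ih =>
      intro a
      have hrw : (fun ω => yIter R ω (s+1) a)
          = fun ω => ∑ k, (R s a k ω / ∑ k', R s k' k ω) * yIter R ω s k := by
        funext ω
        show ((Wof R s ω).mulVec (yIter R ω s)) a = _
        rw [Matrix.mulVec, dotProduct]
        rfl
      rw [hrw]
      exact Finset.measurable_sum _ fun k _ =>
        ((hRmeas s a k).div (Finset.measurable_sum _ fun k' _ => hRmeas s k' k)).mul (ih k)
  -- chains
  set β : ℕ := t / B with hβ
  set jm : ℕ := β / (n - 1) with hjm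
  have hch := fun l : ℕ => exists_chain (B := B) hn hPeps hPirr i (β - l * (n - 1))
  choose A av cv τv hA0 hAsucc hAuniv hspec using hch
  -- events
  set E : ℕ → Set Ω := fun l =>
    ⋂ m ∈ Finset.range (n - 1), {ω | R (τv l m) (cv l m) (av l m) ω = 1} with hE
  have hEmeas : ∀ l, MeasurableSet (E l) := fun l =>
    (Finset.range (n-1)).measurableSet_biInter fun m _ =>
      hRmeas _ _ _ (measurableSet_singleton 1)
  have hEmem : ∀ l ω, ω ∈ E l ↔ ∀ m, m < n - 1 → R (τv l m) (cv l m) (av l m) ω = 1 := by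
    intro l ω
    simp [hE, Set.mem_iInter, Finset.mem_range]
  -- block location of the chain times
  have hτdiv : ∀ l m, m < n - 1 → τv l m / B = β - l * (n - 1) + (n - 2 - m) := by
    intro l m hm
    obtain ⟨-, -, hτ, -⟩ := hspec l m hm
    rw [Finset.mem_Ico] at hτ
    exact Nat.div_eq_of_lt_le hτ.1 hτ.2
  have hτrange : ∀ l m, m < n - 1 →
      β - l * (n - 1) ≤ τv l m / B ∧ τv l m / B < β - l * (n - 1) + (n - 1) := by
    intro l m hm
    rw [hτdiv l m hm]
    omega
  -- index sets
  set idx : ℕ → ℕ → ℕ × Fin n × Fin n := fun l m => (τv l m, cv l m, av l m) with hidx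
  set SS : ℕ → Finset (ℕ × Fin n × Fin n) := fun l =>
    (Finset.range (n-1)).image (idx l) with hSS
  have hinj : ∀ l, ∀ m ∈ Finset.range (n-1), ∀ m' ∈ Finset.range (n-1),
      idx l m = idx l m' → m = m' := by
    intro l m hm m' hm' h
    rw [Finset.mem_range] at hm hm'
    have h1 : τv l m = τv l m' := congrArg Prod.fst h
    have h2 := hτdiv l m hm
    have h3 := hτdiv l m' hm'
    rw [h1, h3] at h2
    omega
  have hSSfst : ∀ l q, q ∈ SS l →
      β - l * (n - 1) ≤ q.1 / B ∧ q.1 / B < β - l * (n - 1) + (n - 1) := by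
    intro l q hq
    rw [hSS] at hq
    simp only [Finset.mem_image, Finset.mem_range] at hq
    obtain ⟨m, hm, rfl⟩ := hq
    exact hτrange l m hm
  have hEalt : ∀ l, E l = {ω | ∀ q ∈ SS l, R q.1 q.2.1 q.2.2 ω = 1} := by
    intro l
    ext ω
    rw [hEmem]
    constructor
    · intro h q hq
      rw [hSS] at hq
      simp only [Finset.mem_image, Finset.mem_range] at hq
      obtain ⟨m, hm, rfl⟩ := hq
      exact h m hm
    · intro h m hm
      refine h (idx l m) ?_
      rw [hSS]
      simp only [Finset.mem_image, Finset.mem_range]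
      exact ⟨m, hm, rfl⟩
  -- lower bound on the probability of each run event
  have hElow : ∀ l, ENNReal.ofReal pe ≤ μ (E l) := by
    intro l
    have hEpre : E l = ⋂ q ∈ SS l, (fun ω => R q.1 q.2.1 q.2.2 ω) ⁻¹' {1} := by
      rw [hEalt l]
      ext ω
      simp [Set.mem_iInter]
    have hprod := hindep.measure_inter_preimage_eq_mul (SS l)
      (sets := fun _ => ({1} : Set ℝ)) (fun _ _ => measurableSet_singleton 1)
    rw [hEpre, hprod, Finset.prod_image (hinj l)]
    have hfac : ∀ m ∈ Finset.range (n-1),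
        ENNReal.ofReal ε ≤ μ ((fun ω => R (idx l m).1 (idx l m).2.1 (idx l m).2.2 ω) ⁻¹' {1}) := by
      intro m hm
      rw [Finset.mem_range] at hm
      obtain ⟨-, -, -, hP⟩ := hspec l m hm
      have : ((fun ω => R (idx l m).1 (idx l m).2.1 (idx l m).2.2 ω) ⁻¹' {1})
          = {ω | R (τv l m) (cv l m) (av l m) ω = 1} := rfl
      rw [this, hRP]
      exact ENNReal.ofReal_le_ofReal hP
    calc ENNReal.ofReal pe = ENNReal.ofReal ε ^ (n-1) := by
          rw [hpe, ENNReal.ofReal_pow (le_of_lt hε)]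
      _ = ∏ _m ∈ Finset.range (n-1), ENNReal.ofReal ε := by
          rw [Finset.prod_const, Finset.card_range]
      _ ≤ ∏ m ∈ Finset.range (n-1),
            μ ((fun ω => R (idx l m).1 (idx l m).2.1 (idx l m).2.2 ω) ⁻¹' {1}) :=
          Finset.prod_le_prod' hfac
  -- failure events
  set FF : ℕ → Set Ω := fun k => ⋂ l ∈ Finset.Icc 1 k, (E l)ᶜ with hFF
  have hFFmeas : ∀ k, MeasurableSet (FF k) := fun k =>
    (Finset.Icc 1 k).measurableSet_biInter fun l _ => (hEmeas l).compl
  have hFFmem : ∀ k ω, ω ∈ FF k ↔ ∀ l, 1 ≤ l → l ≤ k → ω ∉ E l := by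
    intro k ω
    simp only [hFF, Set.mem_iInter, Finset.mem_Icc, Set.mem_compl_iff]
    constructor
    · intro h l h1 h2
      exact h l ⟨h1, h2⟩
    · intro h l hl
      exact h l hl.1 hl.2
  have hjmle : jm * (n-1) ≤ β := Nat.div_mul_le_self β (n-1)
  have hFail : ∀ k, k ≤ jm → μ (FF k) ≤ (1 - ENNReal.ofReal pe) ^ k := by
    intro k
    induction k with
    | zero =>
      intro _
      have : FF 0 = Set.univ := by
        ext ω; rw [hFFmem]; simp; omega
      rw [this, pow_zero, measure_univ]
    | succ k ih =>
      intro hk1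
      have hk : k ≤ jm := by omega
      -- disjoint groups
      set T1 : Finset (ℕ × Fin n × Fin n) := (Finset.Icc 1 k).biUnion SS with hT1
      set T2 : Finset (ℕ × Fin n × Fin n) := SS (k+1) with hT2
      have hdisj : Disjoint T1 T2 := by
        rw [Finset.disjoint_left]
        intro q hq1 hq2
        rw [hT1, Finset.mem_biUnion] at hq1
        obtain ⟨l, hl, hql⟩ := hq1
        rw [Finset.mem_Icc] at hl
        have f1 := hSSfst l q hql
        have f2 := hSSfst (k+1) q hq2
        have hlk : l * (n-1) ≤ k * (n-1) := Nat.mul_le_mul_right _ hl.2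
        have hk1m : (k+1) * (n-1) = k * (n-1) + (n-1) := by ring
        have hk1β : (k+1) * (n-1) ≤ β := by
          calc (k+1) * (n-1) ≤ jm * (n-1) := Nat.mul_le_mul_right _ hk1
            _ ≤ β := hjmle
        omega
      have hIndepF := hindep.indepFun_finset T1 T2 hdisj
        (fun q => hRmeas q.1 q.2.1 q.2.2)
      -- describe events as preimages of the tuples
      set g1 : Ω → ((q : T1) → ℝ) := fun ω q => R (q:ℕ × Fin n × Fin n).1
        (q:ℕ × Fin n × Fin n).2.1 (q:ℕ × Fin n × Fin n).2.2 ω with hg1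
      set g2 : Ω → ((q : T2) → ℝ) := fun ω q => R (q:ℕ × Fin n × Fin n).1
        (q:ℕ × Fin n × Fin n).2.1 (q:ℕ × Fin n × Fin n).2.2 ω with hg2
      set D1 : Set ((q : T1) → ℝ) := ⋂ l ∈ Finset.Icc 1 k,
        (⋂ (q : T1) (_ : (q : ℕ × Fin n × Fin n) ∈ SS l), {v | v q = 1})ᶜ with hD1
      set D2 : Set ((q : T2) → ℝ) := ⋂ (q : T2), {v | v q = 1} with hD2
      have hD1meas : MeasurableSet D1 := by
        apply Finset.measurableSet_biInter
        intro l _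
        apply MeasurableSet.compl
        apply MeasurableSet.iInter
        intro q
        apply MeasurableSet.iInter
        intro _
        exact measurable_pi_apply q (measurableSet_singleton 1)
      have hD2meas : MeasurableSet D2 := by
        apply MeasurableSet.iInter
        intro q
        exact measurable_pi_apply q (measurableSet_singleton 1)
      have hFFpre : FF k = g1 ⁻¹' D1 := by
        ext ω
        rw [hFFmem]
        simp only [hD1, Set.mem_preimage, Set.mem_iInter, Set.mem_compl_iff,
          Set.mem_setOf_eq, Finset.mem_Icc]
        constructor
        · intro h l hl
          intro hEl
          apply h l hl.1 hl.2
          rw [hEalt]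
          intro q hq
          exact hEl ⟨q, Finset.mem_biUnion.2 ⟨l, Finset.mem_Icc.2 hl, hq⟩⟩ hq
        · intro h l h1 h2 hEl
          apply h l ⟨h1, h2⟩
          intro q hq
          rw [hEalt] at hEl
          exact hEl q hq
      have hEpre2 : E (k+1) = g2 ⁻¹' D2 := by
        ext ω
        rw [hEalt]
        simp only [hD2, Set.mem_preimage, Set.mem_iInter, Set.mem_setOf_eq]
        constructor
        · intro h q
          exact h q q.2
        · intro h q hq
          exact h ⟨q, hq⟩
      have hstep : FF (k+1) = FF k ∩ (E (k+1))ᶜ := by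
        ext ω
        rw [hFFmem, Set.mem_inter_iff, hFFmem]
        simp only [Set.mem_compl_iff]
        constructor
        · intro h
          exact ⟨fun l h1 h2 => h l h1 (by omega), h (k+1) (by omega) le_rfl⟩
        · rintro ⟨h1, h2⟩ l hl1 hl2
          rcases Nat.lt_or_ge l (k+1) with hlt | hge
          · exact h1 l hl1 (by omega)
          · have : l = k + 1 := by omega
            rw [this]
            exact h2
      have hmul : μ (FF (k+1)) = μ (FF k) * μ ((E (k+1))ᶜ) := by
        rw [hstep, hFFpre, hEpre2, ← Set.preimage_compl]
        exact hIndepF.measure_inter_preimage_eq_mul _ _ hD1meas hD2meas.compl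
      rw [hmul, pow_succ]
      have hcompl : μ ((E (k+1))ᶜ) ≤ 1 - ENNReal.ofReal pe := by
        rw [prob_compl_eq_one_sub (hEmeas (k+1))]
        exact tsub_le_tsub_left (hElow (k+1)) 1
      exact mul_le_mul' (ih hk) hcompl
  -- the dominating function
  set ind : ℕ → Ω → ℝ := fun l => (FF l).indicator (fun _ => (1:ℝ)) with hind
  set F : Ω → ℝ := fun ω => Real.log n * B
      + Real.log n * (((n - 1 : ℕ) : ℝ) * B) * ∑ l ∈ Finset.range (jm + 1), ind l ω with hF
  have hFapp : ∀ ω, F ω = Real.log n * B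
      + Real.log n * (((n - 1 : ℕ) : ℝ) * B) * ∑ l ∈ Finset.range (jm + 1), ind l ω :=
    fun ω => rfl
  have hind01 : ∀ l ω, ind l ω = 0 ∨ ind l ω = 1 := by
    intro l ω
    rw [hind]
    by_cases h : ω ∈ FF l
    · right; simp [Set.indicator_of_mem h]
    · left; simp [Set.indicator_of_notMem h]
  have hindnn : ∀ l ω, 0 ≤ ind l ω := by
    intro l ω; rcases hind01 l ω with h | h <;> rw [h] <;> norm_num
  -- pointwise domination
  have hdom : ∀ᵐ ω ∂μ, Real.log (1 / yIter R ω t i) ≤ F ω := by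
    filter_upwards [hdiag_ae] with ω hdω
    have h01ω : ∀ τ (a b : Fin n), R τ a b ω = 0 ∨ R τ a b ω = 1 :=
      fun τ a b => hR01 τ a b ω
    have hypos : 0 < yIter R ω t i := yIter_pos hn0 hdω h01ω t i
    -- a generic logarithmic bound
    have hlogb : ∀ s : ℕ, s ≤ t → ((n:ℝ))⁻¹ ^ (t - s) ≤ yIter R ω t i →
        Real.log (1 / yIter R ω t i) ≤ ((t - s : ℕ) : ℝ) * Real.log n := by
      intro s hs hge
      rw [one_div, Real.log_inv]
      have hlb : Real.log ((n:ℝ)⁻¹ ^ (t - s)) ≤ Real.log (yIter R ω t i) :=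
        Real.log_le_log (by positivity) hge
      rw [Real.log_pow, Real.log_inv] at hlb
      push_cast at hlb ⊢
      linarith
    by_cases hnone : ∀ l, 1 ≤ l → l ≤ jm → ω ∉ E l
    · -- all runs fail
      have hindall : ∀ l ∈ Finset.range (jm + 1), ind l ω = 1 := by
        intro l hl
        rw [Finset.mem_range] at hl
        have hmem : ω ∈ FF l := by
          rw [hFFmem]
          intro l' h1 h2
          exact hnone l' h1 (by omega)
        rw [hind]
        simp [Set.indicator_of_mem hmem]
      have hsum : ∑ l ∈ Finset.range (jm + 1), ind l ω = (jm + 1 : ℕ) := by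
        rw [Finset.sum_congr rfl hindall, Finset.sum_const, Finset.card_range]
        simp
      have hbase : Real.log (1 / yIter R ω t i) ≤ (t : ℝ) * Real.log n := by
        have := hlogb 0 (Nat.zero_le t) (by simpa using yIter_ge_pow hdω h01ω t i)
        simpa using this
      have htle : (t : ℝ) ≤ (B : ℝ) + ((n - 1 : ℕ) : ℝ) * B * (jm + 1 : ℕ) := by
        have h1 : t < (β + 1) * B := by
          rw [hβ]; exact nat_lt_div_succ_mul t B hBpos
        have h2 : β + 1 ≤ (jm + 1) * (n - 1) := by
          have := nat_lt_div_succ_mul β (n - 1) (by omega)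
          rw [hjm]; omega
        have h3 : t < (jm + 1) * (n - 1) * B :=
          lt_of_lt_of_le h1 (Nat.mul_le_mul_right B h2)
        have h3' : (t:ℝ) < ((jm + 1 : ℕ) : ℝ) * ((n - 1 : ℕ) : ℝ) * B := by
          exact_mod_cast h3
        have hBnn : (0:ℝ) ≤ B := by positivity
        nlinarith [h3']
      rw [hFapp ω, hsum]
      calc Real.log (1 / yIter R ω t i) ≤ (t : ℝ) * Real.log n := hbase
        _ ≤ ((B : ℝ) + ((n - 1 : ℕ) : ℝ) * B * (jm + 1 : ℕ)) * Real.log n :=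
            mul_le_mul_of_nonneg_right htle hlogn
        _ = Real.log n * B + Real.log n * (((n - 1 : ℕ) : ℝ) * B) * ((jm + 1 : ℕ) : ℝ) := by
            push_cast
            ring
    · -- some run succeeds
      push_neg at hnone
      have hQ : ∃ l, 1 ≤ l ∧ l ≤ jm ∧ ω ∈ E l := by
        obtain ⟨l, h1, h2, h3⟩ := hnone
        exact ⟨l, h1, h2, h3⟩
      set l₀ := Nat.find hQ with hl₀
      obtain ⟨hl₀1, hl₀jm, hl₀E⟩ := Nat.find_spec hQ
      have hmin : ∀ l, l < l₀ → ¬(1 ≤ l ∧ l ≤ jm ∧ ω ∈ E l) := fun l hl =>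
        Nat.find_min hQ hl
      -- indicators below l₀ are all one
      have hind1 : ∀ l, l < l₀ → ind l ω = 1 := by
        intro l hl
        have hmem : ω ∈ FF l := by
          rw [hFFmem]
          intro l' h1 h2 hEl'
          exact hmin l' (by omega) ⟨h1, by omega, hEl'⟩
        rw [hind]
        simp [Set.indicator_of_mem hmem]
      have hsum_ge : (l₀ : ℝ) ≤ ∑ l ∈ Finset.range (jm + 1), ind l ω := by
        have hsub : Finset.range l₀ ⊆ Finset.range (jm + 1) := by
          apply Finset.range_subset_range.2
          omega
        have h1 : ∑ l ∈ Finset.range l₀, ind l ω = (l₀ : ℝ) := by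
          rw [Finset.sum_congr rfl (fun l hl => hind1 l (Finset.mem_range.1 hl)),
            Finset.sum_const, Finset.card_range]
          simp
        rw [← h1]
        exact Finset.sum_le_sum_of_subset_of_nonneg hsub
          (fun l _ _ => hindnn l ω)
      -- the successful run gives a reach
      set b : ℕ := β - l₀ * (n - 1) with hb
      have hωE : ∀ m, m < n - 1 → R (τv l₀ m) (cv l₀ m) (av l₀ m) ω = 1 :=
        (hEmem l₀ ω).1 hl₀E
      have hreach := reach_of_chain (B := B) hn (A l₀) (av l₀) (cv l₀) (τv l₀) i b
        (hA0 l₀) (hAsucc l₀) (hAuniv l₀)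
        (fun m hm => ⟨(hspec l₀ m hm).2.1, (hspec l₀ m hm).2.2.1⟩) hωE
      have hl₀β : l₀ * (n - 1) ≤ β := by
        calc l₀ * (n - 1) ≤ jm * (n - 1) := Nat.mul_le_mul_right _ hl₀jm
          _ ≤ β := hjmle
      have hone : (n - 1) ≤ l₀ * (n-1) := by
        calc (n-1) = 1 * (n-1) := (one_mul _).symm
          _ ≤ l₀ * (n-1) := Nat.mul_le_mul_right _ hl₀1
      have hend : (b + (n - 1)) * B ≤ t := by
        have h1 : b + (n - 1) ≤ β := by omega
        calc (b + (n - 1)) * B ≤ β * B := Nat.mul_le_mul_right _ h1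
          _ ≤ t := by rw [hβ]; exact Nat.div_mul_le_self t B
      obtain ⟨j0, hj0⟩ := yIter_exists_one_le hn0 hdω h01ω (b * B)
      have hre : PSReach R ω j0 (b * B) i t := (hreach j0).pad hend
      have hge0 := yIter_reach_ge hdω h01ω hre
      have hge : ((n:ℝ))⁻¹ ^ (t - b * B) ≤ yIter R ω t i := by
        calc ((n:ℝ))⁻¹ ^ (t - b * B) = ((n:ℝ))⁻¹ ^ (t - b * B) * 1 := (mul_one _).symm
          _ ≤ ((n:ℝ))⁻¹ ^ (t - b * B) * yIter R ω (b * B) j0 := by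
              apply mul_le_mul_of_nonneg_left hj0 (by positivity)
          _ ≤ yIter R ω t i := hge0
      have hsle : b * B ≤ t :=
        le_trans (Nat.mul_le_mul_right B (Nat.le_add_right b (n - 1))) hend
      have hlog := hlogb (b * B) hsle hge
      -- arithmetic: t - b*B ≤ B + (n-1)*B*l₀
      have harith : ((t - b * B : ℕ) : ℝ) ≤ (B:ℝ) + ((n - 1 : ℕ) : ℝ) * B * l₀ := by
        have h1 : t < β * B + B := by
          have h := nat_lt_div_succ_mul t B hBpos
          rw [hβ]
          calc t < (t / B + 1) * B := h
            _ = t / B * B + B := by ring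
        have hbB : b * B = β * B - l₀ * (n - 1) * B := by
          rw [hb, Nat.sub_mul]
        have hXle : l₀ * (n - 1) * B ≤ β * B := Nat.mul_le_mul_right _ hl₀β
        have h2 : t - b * B ≤ l₀ * (n - 1) * B + B - 1 := by omega
        have h3 : ((t - b * B : ℕ) : ℝ) ≤ ((l₀ * (n-1) * B + B - 1 : ℕ) : ℝ) := by
          exact_mod_cast h2
        calc ((t - b * B : ℕ) : ℝ) ≤ ((l₀ * (n-1) * B + B - 1 : ℕ) : ℝ) := h3
          _ ≤ ((l₀ * (n-1) * B + B : ℕ) : ℝ) := by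
              exact_mod_cast Nat.sub_le _ 1
          _ = (B:ℝ) + ((n - 1 : ℕ) : ℝ) * B * l₀ := by
              push_cast
              ring
      rw [hFapp ω]
      calc Real.log (1 / yIter R ω t i) ≤ ((t - b * B : ℕ) : ℝ) * Real.log n := hlog
        _ ≤ ((B:ℝ) + ((n - 1 : ℕ) : ℝ) * B * l₀) * Real.log n :=
            mul_le_mul_of_nonneg_right harith hlogn
        _ = Real.log n * B + Real.log n * (((n - 1 : ℕ) : ℝ) * B) * (l₀ : ℝ) := by ring
        _ ≤ Real.log n * B + Real.log n * (((n - 1 : ℕ) : ℝ) * B)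
              * ∑ l ∈ Finset.range (jm + 1), ind l ω := by
            apply add_le_add_right
            apply mul_le_mul_of_nonneg_left hsum_ge
            positivity
  -- integrability
  have hlogmeas : Measurable fun ω => Real.log (1 / yIter R ω t i) :=
    Real.measurable_log.comp (measurable_const.div (ymeas t i))
  have habs : ∀ᵐ ω ∂μ, ‖Real.log (1 / yIter R ω t i)‖ ≤ ((t:ℝ) + 1) * Real.log n := by
    filter_upwards [hdiag_ae] with ω hdω
    have h01ω : ∀ τ (a b : Fin n), R τ a b ω = 0 ∨ R τ a b ω = 1 :=
      fun τ a b => hR01 τ a b ω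
    have hypos : 0 < yIter R ω t i := yIter_pos hn0 hdω h01ω t i
    have hyle : yIter R ω t i ≤ n := yIter_le_n hdω h01ω t i
    have hyge : ((n:ℝ))⁻¹ ^ t ≤ yIter R ω t i := yIter_ge_pow hdω h01ω t i
    rw [one_div, Real.log_inv, Real.norm_eq_abs, abs_neg, abs_le]
    constructor
    · have h1 : Real.log ((n:ℝ)⁻¹ ^ t) ≤ Real.log (yIter R ω t i) :=
        Real.log_le_log (by positivity) hyge
      rw [Real.log_pow, Real.log_inv] at h1
      nlinarith
    · have h2 : Real.log (yIter R ω t i) ≤ Real.log n := Real.log_le_log hypos hyle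
      nlinarith
  have hfint : Integrable (fun ω => Real.log (1 / yIter R ω t i)) μ :=
    Integrable.mono' (integrable_const _) hlogmeas.aestronglyMeasurable habs
  have hindint : ∀ l, Integrable (ind l) μ := fun l =>
    (integrable_const (1:ℝ)).indicator (hFFmeas l)
  have hFint : Integrable F μ := by
    simp only [hF]
    exact (integrable_const _).add
      (((integrable_finset_sum _ (fun l _ => hindint l))).const_mul _)
  -- integrate
  have hint_le : ∫ ω, Real.log (1 / yIter R ω t i) ∂μ ≤ ∫ ω, F ω ∂μ :=
    integral_mono_ae hfint hFint hdom
  have hindval : ∀ l, ∫ ω, ind l ω ∂μ = (μ (FF l)).toReal := by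
    intro l
    rw [hind]
    rw [integral_indicator_const (1:ℝ) (hFFmeas l)]
    simp
    rfl
  have hFval : ∫ ω, F ω ∂μ = Real.log n * B
      + Real.log n * (((n - 1 : ℕ) : ℝ) * B) * ∑ l ∈ Finset.range (jm + 1), (μ (FF l)).toReal := by
    simp only [hF]
    rw [integral_add (integrable_const _)
      (((integrable_finset_sum _ (fun l _ => hindint l))).const_mul _)]
    rw [integral_const]
    rw [integral_const_mul, integral_finset_sum _ (fun l _ => hindint l)]
    simp only [measure_univ, probReal_univ, ENNReal.toReal_one, one_smul]
    congr 1
    congr 1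
    exact Finset.sum_congr rfl (fun l _ => hindval l)
  -- bound the measures
  have hμle : ∀ l ∈ Finset.range (jm + 1), (μ (FF l)).toReal ≤ (1 - pe) ^ l := by
    intro l hl
    rw [Finset.mem_range] at hl
    have h1 := hFail l (by omega)
    have h2 : (1 - ENNReal.ofReal pe) ^ l = ENNReal.ofReal ((1 - pe) ^ l) := by
      rw [← ENNReal.ofReal_one, ← ENNReal.ofReal_sub 1 (le_of_lt hpe_pos),
        ← ENNReal.ofReal_pow (by linarith)]
    rw [h2] at h1
    calc (μ (FF l)).toReal ≤ (ENNReal.ofReal ((1 - pe) ^ l)).toReal :=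
        ENNReal.toReal_mono ENNReal.ofReal_ne_top h1
      _ = (1 - pe) ^ l := ENNReal.toReal_ofReal (pow_nonneg (by linarith) l)
  have hsumle : ∑ l ∈ Finset.range (jm + 1), (μ (FF l)).toReal ≤ 1 / pe := by
    calc ∑ l ∈ Finset.range (jm + 1), (μ (FF l)).toReal
        ≤ ∑ l ∈ Finset.range (jm + 1), (1 - pe) ^ l := Finset.sum_le_sum hμle
      _ ≤ 1 / (1 - (1 - pe)) := my_geom_le (r := 1 - pe) (by linarith) (by linarith) (jm + 1)
      _ = 1 / pe := by ring_nf
  -- final arithmetic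
  have hfinal : Real.log n * B
      + Real.log n * (((n - 1 : ℕ) : ℝ) * B) * (1 / pe)
      ≤ Real.log n * ((n : ℝ) * B / p + (B : ℝ)) := by
    have hn1cast : ((n - 1 : ℕ) : ℝ) = (n : ℝ) - 1 := by
      have : (1:ℕ) ≤ n := by omega
      push_cast [Nat.cast_sub this]
      ring
    rw [hn1cast]
    have hkey : ((n : ℝ) - 1) * B * (1 / pe) ≤ (n : ℝ) * B / p := by
      have hBnn : (0:ℝ) ≤ B := by positivity
      have h1 : ((n : ℝ) - 1) * B * (1 / pe) = ((n : ℝ) - 1) * B / pe := by ring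
      rw [h1]
      calc ((n : ℝ) - 1) * B / pe ≤ ((n : ℝ) - 1) * B / p := by
            gcongr
          _ ≤ (n : ℝ) * B / p := by
            gcongr
            nlinarith
    calc Real.log n * B + Real.log n * (((n:ℝ) - 1) * B) * (1 / pe)
        = Real.log n * B + Real.log n * (((n:ℝ) - 1) * B * (1 / pe)) := by ring
      _ ≤ Real.log n * B + Real.log n * ((n : ℝ) * B / p) :=
          add_le_add_right (mul_le_mul_of_nonneg_left hkey hlogn) _
      _ = Real.log n * ((n : ℝ) * B / p + (B : ℝ)) := by ring
  -- conclusion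
  show ∫ ω, Real.log (1 / yIter R ω t i) ∂μ ≤ Real.log n * ((n : ℝ) * B / p + (B : ℝ))
  calc ∫ ω, Real.log (1 / yIter R ω t i) ∂μ ≤ ∫ ω, F ω ∂μ := hint_le
    _ = Real.log n * B + Real.log n * (((n - 1 : ℕ) : ℝ) * B)
        * ∑ l ∈ Finset.range (jm + 1), (μ (FF l)).toReal := hFval
    _ ≤ Real.log n * B + Real.log n * (((n - 1 : ℕ) : ℝ) * B) * (1 / pe) := by
        apply add_le_add_right
        apply mul_le_mul_of_nonneg_left hsumle
        positivity
    _ ≤ Real.log n * ((n : ℝ) * B / p + (B : ℝ)) := hfinal
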